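/- Fix 1 ≤ k ≤ n. The derivations D^{(k)}_k, …, D^{(k)}_n of ℤ[e_k, …, e_n] pairwise commute, and the BV bracket identity holds in H_k: for all subsets I, K ⊆ {k, …, n} and monomials e^J, e^L of ℤ[e_k, …, e_n], (−1)^{|I|} {α_I e^J, α_K e^L} = Δ_k(α_I e^L) · (α_K e^J) + (−1)^{|I|} (α_I e^L) · Δ_k(α_K e^J). -/

import Mathlib

open MvPolynomial Finset

/-- The element `e_t` of `R_k = ℤ[e_k, …, e_n]` (variable index `i : Fin (n+1-k)`
corresponds to `e_{k+i}`), with `e_0 = 1` and `e_t = 0` for `0 < t < k` or `t > n`. -/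
noncomputable def eek (n k : ℕ) (t : ℕ) : MvPolynomial (Fin (n + 1 - k)) ℤ :=
  if t = 0 then 1
  else if h : k ≤ t ∧ t ≤ n then MvPolynomial.X ⟨t - k, by omega⟩ else 0

/-- The derivation `D^{(k)}_ℓ = ∂/∂e_ℓ + ∑_{j=k}^{n−ℓ} e_j ∂/∂e_{ℓ+j}` (with `ℓ = k + i`). -/
noncomputable def DDk (n k : ℕ) (i : Fin (n + 1 - k)) :
    MvPolynomial (Fin (n + 1 - k)) ℤ →ₗ[ℤ] MvPolynomial (Fin (n + 1 - k)) ℤ :=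
  ∑ j : Fin (n + 1 - k), if i ≤ j then
    (LinearMap.mulLeft ℤ (eek n k (j.val - i.val))).comp (MvPolynomial.pderiv j).toLinearMap
  else 0

/-- The model of `H_k = Λ_ℤ(α_k,…,α_n) ⊗ ℤ[e_k,…,e_n]`: `a : Hk n k` represents
`∑_I α_I · (a I)` (index `i : Fin (n+1-k)` corresponds to `α_{k+i}`). -/
abbrev Hk (n k : ℕ) := Finset (Fin (n + 1 - k)) → MvPolynomial (Fin (n + 1 - k)) ℤ

/-- The Koszul sign defined by `α_{I∪K} = sgn(I,K) α_I α_K` for disjoint `I, K`. -/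
def sgnk (n k : ℕ) (I K : Finset (Fin (n + 1 - k))) : ℤ :=
  (-1) ^ (((I ×ˢ K).filter (fun p => p.2 < p.1)).card)

/-- The basis element `α_I · p`. -/
noncomputable def bask {n k : ℕ} (I : Finset (Fin (n + 1 - k)))
    (p : MvPolynomial (Fin (n + 1 - k)) ℤ) : Hk n k :=
  fun S => if S = I then p else 0

/-- The graded-commutative product on `H_k`. -/
noncomputable def wmulk {n k : ℕ} (a b : Hk n k) : Hk n k :=
  fun S => ∑ I ∈ S.powerset, sgnk n k I (S \ I) * a I * b (S \ I)

/-- The BV operator `Δ_k(α_I e^J) = ∑_ℓ (∂α_I/∂α_ℓ) · D^{(k)}_ℓ(e^J)`, extended ℤ-linearly. -/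
noncomputable def Hdelk {n k : ℕ} (a : Hk n k) : Hk n k :=
  fun S => ∑ l : Fin (n + 1 - k), if l ∈ S then 0
    else ((-1 : ℤ) ^ ((S.filter (fun i => i < l)).card)) • DDk n k l (a (insert l S))

/-- The BV bracket `{a,b} = (−1)^{|a|}(Δ_k(a·b) − Δ_k(a)·b) − a·Δ_k(b)`, defined on basis
elements and extended ℤ-bilinearly. -/
noncomputable def bkk {n k : ℕ} (a b : Hk n k) : Hk n k :=
  ∑ I : Finset (Fin (n + 1 - k)),
    (((-1 : ℤ) ^ I.card) • (Hdelk (wmulk (bask I (a I)) b) - wmulk (Hdelk (bask I (a I))) b)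
      - wmulk (bask I (a I)) (Hdelk b))

lemma pderiv_comm' {σ : Type*} (i j : σ) (f : MvPolynomial σ ℤ) :
    pderiv i (pderiv j f) = pderiv j (pderiv i f) := by
  classical
  induction f using MvPolynomial.induction_on with
  | C a => simp
  | add p q hp hq => simp [hp, hq]
  | mul_X p m hp =>
    simp only [pderiv_mul, hp, Pi.single_apply, pderiv_X, map_add, mul_ite, mul_one, mul_zero]
    split_ifs <;> ring_nf <;> simp [hp]

lemma eek_pderiv {n k : ℕ} (hk : 1 ≤ k) (p : Fin (n+1-k)) {t : ℕ} (ht : t ≤ n) :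
    pderiv p (eek n k t) = if t = p.val + k then 1 else 0 := by
  unfold eek
  rcases eq_or_ne t 0 with rfl | h0
  · rw [if_pos rfl, if_neg (by omega)]
    simp
  · rw [if_neg h0]
    by_cases h1 : k ≤ t
    · rw [dif_pos ⟨h1, ht⟩, pderiv_X, Pi.single_apply]
      have hiff : ((⟨t - k, by omega⟩ : Fin (n+1-k)) = p) ↔ t = ↑p + k := by
        simp only [Fin.ext_iff, Fin.val_mk]; omega
      simp only [hiff]
    · rw [dif_neg (by tauto), if_neg (by omega)]
      simp

noncomputable def Tm (n k : ℕ) (i q : Fin (n+1-k)) (f : MvPolynomial (Fin (n+1-k)) ℤ) :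
    MvPolynomial (Fin (n+1-k)) ℤ :=
  if i ≤ q then eek n k (q.val - i.val) * pderiv q f else 0

noncomputable def Am (n k : ℕ) (i j p q : Fin (n+1-k)) (f : MvPolynomial (Fin (n+1-k)) ℤ) :
    MvPolynomial (Fin (n+1-k)) ℤ :=
  if i ≤ p ∧ j ≤ q ∧ (q:ℕ) = p.val + j.val + k then
    eek n k (q.val - i.val - j.val - k) * pderiv q f else 0

noncomputable def Bm (n k : ℕ) (i j p q : Fin (n+1-k)) (f : MvPolynomial (Fin (n+1-k)) ℤ) :
    MvPolynomial (Fin (n+1-k)) ℤ :=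
  if i ≤ p ∧ j ≤ q then
    eek n k (p.val - i.val) * eek n k (q.val - j.val) * pderiv p (pderiv q f) else 0

lemma DDk_apply {n k : ℕ} (i : Fin (n+1-k)) (f : MvPolynomial (Fin (n+1-k)) ℤ) :
    DDk n k i f = ∑ q : Fin (n+1-k), Tm n k i q f := by
  rw [DDk, LinearMap.sum_apply]
  refine Finset.sum_congr rfl fun q _ => ?_
  unfold Tm
  by_cases h : i ≤ q <;> simp [h]

lemma Tsplit {n k : ℕ} (hk : 1 ≤ k) (hkn : k ≤ n) (i j p q : Fin (n+1-k))
    (f : MvPolynomial (Fin (n+1-k)) ℤ) :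
    Tm n k i p (Tm n k j q f) = Am n k i j p q f + Bm n k i j p q f := by
  unfold Tm Am Bm
  by_cases hip : i ≤ p
  · by_cases hjq : j ≤ q
    · have hle : (q:ℕ) - (j:ℕ) ≤ n := by omega
      rw [if_pos hip, if_pos hjq, if_pos (show i ≤ p ∧ j ≤ q from ⟨hip, hjq⟩), pderiv_mul,
        eek_pderiv hk p hle]
      by_cases h3 : (q:ℕ) = (p:ℕ) + (j:ℕ) + k
      · have h4 : (q:ℕ) - (j:ℕ) = (p:ℕ) + k := by omega
        have h5 : (q:ℕ) - (i:ℕ) - (j:ℕ) - k = (p:ℕ) - (i:ℕ) := by omega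
        rw [if_pos h4, if_pos (show i ≤ p ∧ j ≤ q ∧ (q:ℕ) = p.val + j.val + k from ⟨hip, hjq, h3⟩),
          h5]
        ring
      · have h4 : ¬ ((q:ℕ) - (j:ℕ) = (p:ℕ) + k) := by
          have := hjq
          rw [Fin.le_def] at this
          omega
        rw [if_neg h4, if_neg (show ¬(i ≤ p ∧ j ≤ q ∧ (q:ℕ) = p.val + j.val + k) by tauto)]
        ring
    · rw [if_neg hjq, if_neg (show ¬(i ≤ p ∧ j ≤ q) by tauto),
        if_neg (show ¬(i ≤ p ∧ j ≤ q ∧ (q:ℕ) = p.val + j.val + k) by tauto)]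
      simp
  · rw [if_neg hip, if_neg (show ¬(i ≤ p ∧ j ≤ q) by tauto),
      if_neg (show ¬(i ≤ p ∧ j ≤ q ∧ (q:ℕ) = p.val + j.val + k) by tauto)]
    simp

lemma Asym {n k : ℕ} (hkn : k ≤ n) (i j : Fin (n+1-k)) (f : MvPolynomial (Fin (n+1-k)) ℤ) :
    ∑ p : Fin (n+1-k), ∑ q : Fin (n+1-k), Am n k i j p q f
      = ∑ q : Fin (n+1-k), if (i:ℕ) + (j:ℕ) + k ≤ (q:ℕ) then
          eek n k ((q:ℕ) - (i:ℕ) - (j:ℕ) - k) * pderiv q f else 0 := by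
  rw [Finset.sum_comm]
  refine Finset.sum_congr rfl fun q _ => ?_
  by_cases hq : (i:ℕ) + (j:ℕ) + k ≤ (q:ℕ)
  · rw [if_pos hq, Finset.sum_eq_single (⟨(q:ℕ) - (j:ℕ) - k, by omega⟩ : Fin (n+1-k))]
    · unfold Am
      rw [if_pos]
      refine ⟨?_, ?_, ?_⟩
      · rw [Fin.le_def]
        show (i:ℕ) ≤ (q:ℕ) - (j:ℕ) - k
        omega
      · rw [Fin.le_def]; omega
      · show (q:ℕ) = ((q:ℕ) - (j:ℕ) - k) + (j:ℕ) + k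
        omega
    · intro b _ hb
      unfold Am
      rw [if_neg]
      rintro ⟨h1, h2, h3⟩
      rw [Fin.le_def] at h1 h2
      refine hb (Fin.ext ?_)
      show (b:ℕ) = (q:ℕ) - (j:ℕ) - k
      omega
    · intro h
      exact absurd (Finset.mem_univ _) h
  · rw [if_neg hq]
    refine Finset.sum_eq_zero fun p _ => ?_
    unfold Am
    rw [if_neg]
    rintro ⟨h1, h2, h3⟩
    rw [Fin.le_def] at h1 h2
    omega

lemma Bsym {n k : ℕ} (i j : Fin (n+1-k)) (f : MvPolynomial (Fin (n+1-k)) ℤ) :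
    ∑ p : Fin (n+1-k), ∑ q : Fin (n+1-k), Bm n k i j p q f
      = ∑ p : Fin (n+1-k), ∑ q : Fin (n+1-k), Bm n k j i p q f := by
  rw [Finset.sum_comm]
  refine Finset.sum_congr rfl fun q _ => Finset.sum_congr rfl fun p _ => ?_
  unfold Bm
  by_cases h1 : i ≤ p <;> by_cases h2 : j ≤ q
  · rw [if_pos (show i ≤ p ∧ j ≤ q from ⟨h1, h2⟩), if_pos (show j ≤ q ∧ i ≤ p from ⟨h2, h1⟩),
      pderiv_comm']
    ring
  · rw [if_neg (by tauto), if_neg (by tauto)]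
  · rw [if_neg (by tauto), if_neg (by tauto)]
  · rw [if_neg (by tauto), if_neg (by tauto)]

lemma DDk_comm {n k : ℕ} (hk : 1 ≤ k) (hkn : k ≤ n) (i j : Fin (n + 1 - k)) :
    (DDk n k i).comp (DDk n k j) = (DDk n k j).comp (DDk n k i) := by
  apply LinearMap.ext
  intro f
  simp only [LinearMap.comp_apply]
  have expand : ∀ (a b : Fin (n+1-k)),
      DDk n k a (DDk n k b f)
        = (∑ p : Fin (n+1-k), ∑ q : Fin (n+1-k), Am n k a b p q f)
          + ∑ p : Fin (n+1-k), ∑ q : Fin (n+1-k), Bm n k a b p q f := by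
    intro a b
    rw [DDk_apply b f, map_sum]
    have : ∀ q : Fin (n+1-k), DDk n k a (Tm n k b q f) = ∑ p : Fin (n+1-k), Tm n k a p (Tm n k b q f) :=
      fun q => DDk_apply a _
    rw [Finset.sum_congr rfl fun q _ => this q, Finset.sum_comm]
    rw [Finset.sum_congr rfl fun p _ => Finset.sum_congr rfl fun q _ => Tsplit hk hkn a b p q f]
    rw [← Finset.sum_add_distrib]
    exact Finset.sum_congr rfl fun p _ => Finset.sum_add_distrib
  rw [expand i j, expand j i, Asym hkn, Asym hkn, Bsym]
  congr 1
  refine Finset.sum_congr rfl fun q _ => ?_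
  have h1 : ((i:ℕ) + (j:ℕ) + k ≤ (q:ℕ)) ↔ ((j:ℕ) + (i:ℕ) + k ≤ (q:ℕ)) := by omega
  have h2 : (q:ℕ) - (i:ℕ) - (j:ℕ) - k = (q:ℕ) - (j:ℕ) - (i:ℕ) - k := by omega
  rw [h2]
  exact if_congr h1 rfl rfl

section Basics
variable {n k : ℕ}

lemma bask_zero (I : Finset (Fin (n+1-k))) : bask I (0 : MvPolynomial (Fin (n+1-k)) ℤ) = 0 := by
  funext S; simp [bask]

lemma bask_add (I : Finset (Fin (n+1-k))) (p q : MvPolynomial (Fin (n+1-k)) ℤ) :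
    bask I (p + q) = bask I p + bask I q := by
  funext S; by_cases h : S = I <;> simp [bask, h]

lemma bask_smul (I : Finset (Fin (n+1-k))) (z : ℤ) (p : MvPolynomial (Fin (n+1-k)) ℤ) :
    bask I (z • p) = z • bask I p := by
  funext S; by_cases h : S = I <;> simp [bask, h]

lemma wmulk_zero_left (b : Hk n k) : wmulk 0 b = 0 := by
  funext S; simp [wmulk]

lemma wmulk_zero_right (a : Hk n k) : wmulk a 0 = 0 := by
  funext S; simp [wmulk]

lemma wmulk_smul_left (z : ℤ) (a b : Hk n k) : wmulk (z • a) b = z • wmulk a b := by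
  funext S
  simp only [wmulk, Pi.smul_apply, Finset.smul_sum, smul_mul_assoc, mul_smul_comm]

lemma wmulk_smul_right (z : ℤ) (a b : Hk n k) : wmulk a (z • b) = z • wmulk a b := by
  funext S
  simp only [wmulk, Pi.smul_apply, Finset.smul_sum, smul_mul_assoc, mul_smul_comm]

lemma wmulk_sum_left {γ : Type*} (s : Finset γ) (f : γ → Hk n k) (b : Hk n k) :
    wmulk (∑ l ∈ s, f l) b = ∑ l ∈ s, wmulk (f l) b := by
  funext S
  simp only [wmulk, Finset.sum_apply, Finset.sum_mul, Finset.mul_sum]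
  rw [Finset.sum_comm]

lemma wmulk_sum_right {γ : Type*} (s : Finset γ) (a : Hk n k) (f : γ → Hk n k) :
    wmulk a (∑ l ∈ s, f l) = ∑ l ∈ s, wmulk a (f l) := by
  funext S
  simp only [wmulk, Finset.sum_apply, Finset.sum_mul, Finset.mul_sum]
  rw [Finset.sum_comm]

lemma Hdelk_zero : Hdelk (0 : Hk n k) = 0 := by
  funext S; simp [Hdelk]

lemma wmulk_bask_bask (I K : Finset (Fin (n+1-k))) (p q : MvPolynomial (Fin (n+1-k)) ℤ) :
    wmulk (bask I p) (bask K q)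
      = if Disjoint I K then bask (I ∪ K) ((sgnk n k I K) • (p * q)) else 0 := by
  funext S
  by_cases hd : Disjoint I K
  · rw [if_pos hd]
    show _ = bask (I ∪ K) (sgnk n k I K • (p * q)) S
    simp only [wmulk, bask]
    by_cases hS : S = I ∪ K
    · rw [if_pos hS]
      subst hS
      rw [Finset.sum_eq_single_of_mem I (Finset.mem_powerset.2 Finset.subset_union_left)]
      · have h2 : (I ∪ K) \ I = K := Finset.union_sdiff_cancel_left hd
        rw [h2, if_pos rfl, if_pos rfl, zsmul_eq_mul, mul_assoc]
      · intro b _ hb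
        rw [if_neg hb, mul_zero, zero_mul]
    · rw [if_neg hS]
      refine Finset.sum_eq_zero fun I' hI' => ?_
      by_cases h1 : I' = I
      · subst h1
        have : ¬ (S \ I' = K) := fun hK => hS (by
          rw [← hK, Finset.union_sdiff_of_subset (Finset.mem_powerset.1 hI')])
        rw [if_neg this, mul_zero]
      · rw [if_neg h1, mul_zero, zero_mul]
  · rw [if_neg hd]
    show _ = (0 : MvPolynomial (Fin (n+1-k)) ℤ)
    simp only [wmulk, bask]
    refine Finset.sum_eq_zero fun I' hI' => ?_
    by_cases h1 : I' = I
    · subst h1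
      have : ¬ (S \ I' = K) := fun hK => hd (hK ▸ Finset.disjoint_sdiff)
      rw [if_neg this, mul_zero]
    · rw [if_neg h1, mul_zero, zero_mul]

lemma Hdelk_bask (I : Finset (Fin (n+1-k))) (p : MvPolynomial (Fin (n+1-k)) ℤ) :
    Hdelk (bask I p) = ∑ l ∈ I, bask (I.erase l)
      (((-1 : ℤ) ^ ((I.filter (fun i => i < l)).card)) • DDk n k l p) := by
  funext S
  rw [Hdelk]
  have step : ∀ l : Fin (n+1-k),
      (if l ∈ S then 0
        else ((-1 : ℤ) ^ ((S.filter (fun i => i < l)).card)) • DDk n k l (bask I p (insert l S)))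
      = if l ∈ I then (if S = I.erase l then
          ((-1 : ℤ) ^ ((I.filter (fun i => i < l)).card)) • DDk n k l p else 0) else 0 := by
    intro l
    by_cases hlS : l ∈ S
    · rw [if_pos hlS]
      by_cases hlI : l ∈ I
      · rw [if_pos hlI, if_neg]
        intro hS
        exact Finset.notMem_erase l I (hS ▸ hlS)
      · rw [if_neg hlI]
    · rw [if_neg hlS]
      by_cases hc : insert l S = I
      · have hlI : l ∈ I := hc ▸ Finset.mem_insert_self l S
        have hS : S = I.erase l := by rw [← hc, Finset.erase_insert hlS]
        have hfil : S.filter (fun i => i < l) = I.filter (fun i => i < l) := by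
          rw [← hc, Finset.filter_insert, if_neg (lt_irrefl l)]
        rw [if_pos hlI, if_pos hS, bask, if_pos hc, hfil]
      · have h0 : bask I p (insert l S) = 0 := by rw [bask, if_neg hc]
        rw [h0, map_zero, smul_zero]
        by_cases hlI : l ∈ I
        · rw [if_pos hlI, if_neg]
          intro hS
          exact hc (by rw [hS, Finset.insert_erase hlI])
        · rw [if_neg hlI]
  rw [Finset.sum_congr rfl fun l _ => step l]
  rw [Finset.sum_ite_mem, Finset.univ_inter, Finset.sum_apply]
  refine Finset.sum_congr rfl fun l hl => ?_
  rw [bask]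

end Basics

section Signs
variable {n k : ℕ}

lemma neg_one_pow_congr' {a b : ℕ} (h : a % 2 = b % 2) : ((-1 : ℤ)) ^ a = (-1) ^ b := by
  rcases Nat.even_or_odd a with ha | ha
  · rw [ha.neg_one_pow, (show Even b by rw [Nat.even_iff] at *; omega).neg_one_pow]
  · rw [ha.neg_one_pow, (show Odd b by rw [Nat.odd_iff] at *; omega).neg_one_pow]

lemma sgnk_eq (I K : Finset (Fin (n+1-k))) :
    sgnk n k I K = (-1) ^ (∑ x ∈ I, (K.filter (fun y => y < x)).card) := by
  rw [sgnk]
  congr 1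
  rw [Finset.card_filter, Finset.sum_product]
  exact Finset.sum_congr rfl fun x _ => (Finset.card_filter _ _).symm

lemma esgn_erase_left {I : Finset (Fin (n+1-k))} (K : Finset (Fin (n+1-k)))
    {l : Fin (n+1-k)} (hl : l ∈ I) :
    ∑ x ∈ I, (K.filter (fun y => y < x)).card
      = (K.filter (fun y => y < l)).card + ∑ x ∈ I.erase l, (K.filter (fun y => y < x)).card :=
  (Finset.add_sum_erase I _ hl).symm

lemma esgn_erase_right (I : Finset (Fin (n+1-k))) {K : Finset (Fin (n+1-k))}
    {l : Fin (n+1-k)} (hl : l ∈ K) :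
    ∑ x ∈ I, (K.filter (fun y => y < x)).card
      = (I.filter (fun x => l < x)).card
        + ∑ x ∈ I, ((K.erase l).filter (fun y => y < x)).card := by
  have hx : ∀ x : Fin (n+1-k), (K.filter (fun y => y < x)).card
      = (if l < x then 1 else 0) + ((K.erase l).filter (fun y => y < x)).card := by
    intro x
    conv_lhs => rw [← Finset.insert_erase hl]
    rw [Finset.filter_insert]
    by_cases h : l < x
    · rw [if_pos h, if_pos h, Finset.card_insert_of_notMem
        (fun hmem => Finset.notMem_erase l K (Finset.mem_filter.1 hmem).1)]
      omega
    · rw [if_neg h, if_neg h, zero_add]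
  rw [Finset.sum_congr rfl fun x _ => hx x, Finset.sum_add_distrib]
  congr 1
  exact (Finset.card_filter _ _).symm

lemma filter_lt_card_add {I : Finset (Fin (n+1-k))} {l : Fin (n+1-k)} (hl : l ∉ I) :
    (I.filter (fun y => y < l)).card + (I.filter (fun x => l < x)).card = I.card := by
  have h : I.filter (fun x => ¬ x < l) = I.filter (fun x => l < x) := by
    refine Finset.filter_congr fun x hx => ?_
    have hne : x ≠ l := fun h => hl (h ▸ hx)
    simp only [not_lt]
    exact ⟨fun h => lt_of_le_of_ne h (Ne.symm hne), le_of_lt⟩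
  rw [← h, Finset.card_filter_add_card_filter_not]

lemma filter_erase_lt (I : Finset (Fin (n+1-k))) (l : Fin (n+1-k)) :
    ((I.erase l).filter (fun y => y < l)) = I.filter (fun y => y < l) := by
  rw [Finset.filter_erase, Finset.erase_eq_of_notMem]
  intro h
  exact absurd (Finset.mem_filter.1 h).2 (lt_irrefl l)

lemma filter_erase_gt (I : Finset (Fin (n+1-k))) (l : Fin (n+1-k)) :
    ((I.erase l).filter (fun y => l < y)) = I.filter (fun y => l < y) := by
  rw [Finset.filter_erase, Finset.erase_eq_of_notMem]
  intro h
  exact absurd (Finset.mem_filter.1 h).2 (lt_irrefl l)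

lemma filter_union_card {I K : Finset (Fin (n+1-k))} (hd : Disjoint I K) (l : Fin (n+1-k)) :
    ((I ∪ K).filter (fun y => y < l)).card
      = (I.filter (fun y => y < l)).card + (K.filter (fun y => y < l)).card := by
  rw [Finset.filter_union, Finset.card_union_of_disjoint (Finset.disjoint_filter_filter hd)]

lemma sgnA {I K : Finset (Fin (n+1-k))} (hd : Disjoint I K) {l : Fin (n+1-k)} (hl : l ∈ I) :
    (-1 : ℤ) ^ (((I ∪ K).filter (fun y => y < l)).card) * sgnk n k I K
      = (-1) ^ ((I.filter (fun y => y < l)).card) * sgnk n k (I.erase l) K := by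
  rw [sgnk_eq, sgnk_eq, filter_union_card hd, esgn_erase_left K hl, ← pow_add, ← pow_add]
  exact neg_one_pow_congr' (by omega)

lemma sgnB {I K : Finset (Fin (n+1-k))} (hd : Disjoint I K) {l : Fin (n+1-k)} (hl : l ∈ K) :
    (-1 : ℤ) ^ (((I ∪ K).filter (fun y => y < l)).card) * sgnk n k I K
      = (-1) ^ I.card * ((-1) ^ ((K.filter (fun y => y < l)).card) * sgnk n k I (K.erase l)) := by
  have hlI : l ∉ I := fun h => (Finset.disjoint_left.1 hd h) hl
  rw [sgnk_eq, sgnk_eq, filter_union_card hd, esgn_erase_right I hl, ← pow_add, ← pow_add,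
    ← pow_add]
  have h2 := filter_lt_card_add hlI
  exact neg_one_pow_congr' (by omega)

lemma sgnC {I K : Finset (Fin (n+1-k))} {l : Fin (n+1-k)} (hlI : l ∈ I) (hlK : l ∈ K) :
    -((-1 : ℤ) ^ ((I.filter (fun y => y < l)).card) * sgnk n k (I.erase l) K)
      = (-1) ^ I.card * ((-1) ^ ((K.filter (fun y => y < l)).card) * sgnk n k I (K.erase l)) := by
  rw [sgnk_eq, sgnk_eq, esgn_erase_right (I.erase l) hlK, esgn_erase_left (K.erase l) hlI,
    filter_erase_lt, filter_erase_gt]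
  rw [← pow_add, ← pow_add, ← pow_add]
  rw [show ∀ m : ℕ, -((-1:ℤ)^m) = (-1)^(m+1) by intro m; rw [pow_succ, mul_neg_one]]
  have h2 : (I.filter (fun y => y < l)).card + (I.filter (fun y => l < y)).card
      = (I.erase l).card := by
    rw [← filter_erase_lt I l, ← filter_erase_gt I l]
    exact filter_lt_card_add (Finset.notMem_erase l I)
  have h3 : (I.erase l).card + 1 = I.card := Finset.card_erase_add_one hlI
  exact neg_one_pow_congr' (by omega)

end Signs

section Leibniz
variable {n k : ℕ}

lemma DDk_mul (l : Fin (n+1-k)) (p q : MvPolynomial (Fin (n+1-k)) ℤ) :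
    DDk n k l (p * q) = DDk n k l p * q + p * DDk n k l q := by
  rw [DDk_apply, DDk_apply, DDk_apply, Finset.sum_mul, Finset.mul_sum,
    ← Finset.sum_add_distrib]
  refine Finset.sum_congr rfl fun j _ => ?_
  unfold Tm
  by_cases h : l ≤ j
  · simp only [if_pos h, pderiv_mul]
    ring
  · simp [h]

end Leibniz

section Key
variable {n k : ℕ}

lemma keyI {I K : Finset (Fin (n+1-k))} (hd : Disjoint I K) {l : Fin (n+1-k)} (hl : l ∈ I)
    (p q : MvPolynomial (Fin (n+1-k)) ℤ) :
    bask ((I ∪ K).erase l) (((-1 : ℤ) ^ (((I ∪ K).filter (fun i => i < l)).card)) •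
        (sgnk n k I K • (DDk n k l p * q + p * DDk n k l q)))
    = wmulk (bask (I.erase l) (((-1 : ℤ) ^ ((I.filter (fun i => i < l)).card)) • DDk n k l p))
        (bask K q)
      + wmulk (bask (I.erase l) (((-1 : ℤ) ^ ((I.filter (fun i => i < l)).card)) • DDk n k l q))
        (bask K p) := by
  have hlK : l ∉ K := fun h => Finset.disjoint_left.1 hd hl h
  have hdl : Disjoint (I.erase l) K := hd.mono_left (Finset.erase_subset l I)
  have hU : (I ∪ K).erase l = (I.erase l) ∪ K := by
    rw [Finset.erase_union_distrib, Finset.erase_eq_of_notMem hlK]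
  rw [wmulk_bask_bask, wmulk_bask_bask, if_pos hdl, if_pos hdl, hU, ← bask_add]
  refine congrArg (bask (I.erase l ∪ K)) ?_
  rw [smul_mul_assoc, smul_mul_assoc,
    show p * DDk n k l q = DDk n k l q * p from mul_comm _ _]
  match_scalars <;> linear_combination sgnA hd hl

lemma keyK {I K : Finset (Fin (n+1-k))} (hd : Disjoint I K) {l : Fin (n+1-k)} (hl : l ∈ K)
    (p q : MvPolynomial (Fin (n+1-k)) ℤ) :
    bask ((I ∪ K).erase l) (((-1 : ℤ) ^ (((I ∪ K).filter (fun i => i < l)).card)) •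
        (sgnk n k I K • (DDk n k l p * q + p * DDk n k l q)))
    = ((-1 : ℤ) ^ I.card) •
        (wmulk (bask I p)
            (bask (K.erase l) (((-1 : ℤ) ^ ((K.filter (fun i => i < l)).card)) • DDk n k l q))
          + wmulk (bask I q)
            (bask (K.erase l) (((-1 : ℤ) ^ ((K.filter (fun i => i < l)).card)) • DDk n k l p))) := by
  have hlI : l ∉ I := fun h => (Finset.disjoint_left.1 hd h) hl
  have hdl : Disjoint I (K.erase l) := hd.mono_right (Finset.erase_subset l K)
  have hU : (I ∪ K).erase l = I ∪ (K.erase l) := by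
    rw [Finset.erase_union_distrib, Finset.erase_eq_of_notMem hlI]
  rw [wmulk_bask_bask, wmulk_bask_bask, if_pos hdl, if_pos hdl, hU, ← bask_add, ← bask_smul]
  refine congrArg (bask (I ∪ K.erase l)) ?_
  rw [mul_smul_comm, mul_smul_comm,
    show q * DDk n k l p = DDk n k l p * q from mul_comm _ _]
  match_scalars <;> linear_combination sgnB hd hl

end Key

section KeyMain
variable {n k : ℕ}

lemma bask_neg (I : Finset (Fin (n+1-k))) (p : MvPolynomial (Fin (n+1-k)) ℤ) :
    bask I (-p) = - bask I p := by
  funext S; by_cases h : S = I <;> simp [bask, h]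

lemma bask_sub (I : Finset (Fin (n+1-k))) (p q : MvPolynomial (Fin (n+1-k)) ℤ) :
    bask I (p - q) = bask I p - bask I q := by
  funext S; by_cases h : S = I <;> simp [bask, h]

lemma key (I K : Finset (Fin (n+1-k))) (p q : MvPolynomial (Fin (n+1-k)) ℤ) :
    Hdelk (wmulk (bask I p) (bask K q)) - wmulk (Hdelk (bask I p)) (bask K q)
      - ((-1 : ℤ) ^ I.card) • wmulk (bask I p) (Hdelk (bask K q))
    = wmulk (Hdelk (bask I q)) (bask K p)
      + ((-1 : ℤ) ^ I.card) • wmulk (bask I q) (Hdelk (bask K p)) := by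
  by_cases hd : Disjoint I K
  · have t1 : Hdelk (wmulk (bask I p) (bask K q))
        = (∑ l ∈ I,
            (wmulk (bask (I.erase l)
                (((-1:ℤ) ^ ((I.filter (fun i => i < l)).card)) • DDk n k l p)) (bask K q)
              + wmulk (bask (I.erase l)
                (((-1:ℤ) ^ ((I.filter (fun i => i < l)).card)) • DDk n k l q)) (bask K p)))
          + ∑ l ∈ K, ((-1:ℤ) ^ I.card) •
              (wmulk (bask I p) (bask (K.erase l)
                  (((-1:ℤ) ^ ((K.filter (fun i => i < l)).card)) • DDk n k l q))
                + wmulk (bask I q) (bask (K.erase l)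
                  (((-1:ℤ) ^ ((K.filter (fun i => i < l)).card)) • DDk n k l p))) := by
      rw [wmulk_bask_bask, if_pos hd, Hdelk_bask, Finset.sum_union hd]
      congr 1
      · refine Finset.sum_congr rfl fun l hl => ?_
        rw [map_smul, DDk_mul]
        exact keyI hd hl p q
      · refine Finset.sum_congr rfl fun l hl => ?_
        rw [map_smul, DDk_mul]
        exact keyK hd hl p q
    rw [t1, Hdelk_bask I p, wmulk_sum_left, Hdelk_bask K q, wmulk_sum_right,
        Hdelk_bask I q, wmulk_sum_left, Hdelk_bask K p, wmulk_sum_right,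
        Finset.sum_add_distrib,
        Finset.sum_congr rfl fun l (_ : l ∈ K) => smul_add ((-1:ℤ) ^ I.card) _ _,
        Finset.sum_add_distrib, ← Finset.smul_sum, ← Finset.smul_sum]
    module
  · obtain ⟨m, hmI, hmK⟩ := Finset.not_disjoint_iff.1 hd
    rw [wmulk_bask_bask, if_neg hd, Hdelk_zero,
        Hdelk_bask I p, wmulk_sum_left, Hdelk_bask K q, wmulk_sum_right,
        Hdelk_bask I q, wmulk_sum_left, Hdelk_bask K p, wmulk_sum_right]
    by_cases h1 : Disjoint (I.erase m) K
    · have h2 : Disjoint I (K.erase m) := by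
        rw [Finset.disjoint_left]
        intro x hxI hxK'
        exact Finset.disjoint_left.1 h1
          (Finset.mem_erase.2 ⟨Finset.ne_of_mem_erase hxK', hxI⟩)
          (Finset.mem_of_mem_erase hxK')
      have redI : ∀ P Q : MvPolynomial (Fin (n+1-k)) ℤ,
          (∑ l ∈ I, wmulk (bask (I.erase l)
              (((-1:ℤ) ^ ((I.filter (fun i => i < l)).card)) • DDk n k l P)) (bask K Q))
          = wmulk (bask (I.erase m)
              (((-1:ℤ) ^ ((I.filter (fun i => i < m)).card)) • DDk n k m P)) (bask K Q) := by
        intro P Q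
        refine Finset.sum_eq_single_of_mem m hmI fun l _ hlm => ?_
        rw [wmulk_bask_bask, if_neg]
        exact Finset.not_disjoint_iff.2
          ⟨m, Finset.mem_erase.2 ⟨fun h => hlm h.symm, hmI⟩, hmK⟩
      have redK : ∀ P Q : MvPolynomial (Fin (n+1-k)) ℤ,
          (∑ l ∈ K, wmulk (bask I P) (bask (K.erase l)
              (((-1:ℤ) ^ ((K.filter (fun i => i < l)).card)) • DDk n k l Q)))
          = wmulk (bask I P) (bask (K.erase m)
              (((-1:ℤ) ^ ((K.filter (fun i => i < m)).card)) • DDk n k m Q)) := by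
        intro P Q
        refine Finset.sum_eq_single_of_mem m hmK fun l _ hlm => ?_
        rw [wmulk_bask_bask, if_neg]
        exact Finset.not_disjoint_iff.2
          ⟨m, hmI, Finset.mem_erase.2 ⟨fun h => hlm h.symm, hmK⟩⟩
      rw [redI p q, redI q p, redK p q, redK q p]
      have hUI : (I.erase m) ∪ K = I ∪ K := by
        ext x
        by_cases hx : x = m <;> simp [hx, Finset.mem_erase, Finset.mem_union, hmK, hmI]
      have hUK : I ∪ (K.erase m) = I ∪ K := by
        ext x
        by_cases hx : x = m <;> simp [hx, Finset.mem_erase, Finset.mem_union, hmK, hmI]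
      rw [wmulk_bask_bask, wmulk_bask_bask, wmulk_bask_bask, wmulk_bask_bask,
          if_pos h1, if_pos h1, if_pos h2, if_pos h2, hUI, hUK,
          ← bask_smul, ← bask_smul,
          show (0 : Hk n k) = bask (I ∪ K) 0 from (bask_zero _).symm,
          ← bask_sub, ← bask_sub, ← bask_add]
      refine congrArg (bask (I ∪ K)) ?_
      rw [smul_mul_assoc, smul_mul_assoc, mul_smul_comm, mul_smul_comm,
        show p * DDk n k m q = DDk n k m q * p from mul_comm _ _,
        show q * DDk n k m p = DDk n k m p * q from mul_comm _ _]
      match_scalars <;> linear_combination (sgnC hmI hmK :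
        -((-1 : ℤ) ^ ((I.filter (fun y => y < m)).card) * sgnk n k (I.erase m) K)
        = (-1) ^ I.card * ((-1) ^ ((K.filter (fun y => y < m)).card) * sgnk n k I (K.erase m)))
    · obtain ⟨m', hm'I, hm'K⟩ := Finset.not_disjoint_iff.1 h1
      have hm'm : m' ≠ m := Finset.ne_of_mem_erase hm'I
      have hm'I' : m' ∈ I := Finset.mem_of_mem_erase hm'I
      have zeroI : ∀ P Q : MvPolynomial (Fin (n+1-k)) ℤ,
          (∑ l ∈ I, wmulk (bask (I.erase l)
              (((-1:ℤ) ^ ((I.filter (fun i => i < l)).card)) • DDk n k l P)) (bask K Q)) = 0 := by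
        intro P Q
        refine Finset.sum_eq_zero fun l _ => ?_
        rw [wmulk_bask_bask, if_neg]
        by_cases hlm : l = m'
        · exact Finset.not_disjoint_iff.2
            ⟨m, Finset.mem_erase.2 ⟨fun h => hm'm (hlm ▸ h.symm), hmI⟩, hmK⟩
        · exact Finset.not_disjoint_iff.2
            ⟨m', Finset.mem_erase.2 ⟨fun h => hlm h.symm, hm'I'⟩, hm'K⟩
      have zeroK : ∀ P Q : MvPolynomial (Fin (n+1-k)) ℤ,
          (∑ l ∈ K, wmulk (bask I P) (bask (K.erase l)
              (((-1:ℤ) ^ ((K.filter (fun i => i < l)).card)) • DDk n k l Q))) = 0 := by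
        intro P Q
        refine Finset.sum_eq_zero fun l _ => ?_
        rw [wmulk_bask_bask, if_neg]
        by_cases hlm : l = m'
        · exact Finset.not_disjoint_iff.2
            ⟨m, hmI, Finset.mem_erase.2 ⟨fun h => hm'm (hlm ▸ h.symm), hmK⟩⟩
        · exact Finset.not_disjoint_iff.2
            ⟨m', hm'I', Finset.mem_erase.2 ⟨fun h => hlm h.symm, hm'K⟩⟩
      rw [zeroI p q, zeroI q p, zeroK p q, zeroK q p]
      simp

lemma bkk_bask (I K : Finset (Fin (n+1-k))) (p q : MvPolynomial (Fin (n+1-k)) ℤ) :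
    bkk (bask I p) (bask K q)
      = ((-1 : ℤ) ^ I.card) • (Hdelk (wmulk (bask I p) (bask K q))
          - wmulk (Hdelk (bask I p)) (bask K q))
        - wmulk (bask I p) (Hdelk (bask K q)) := by
  rw [bkk, Finset.sum_eq_single_of_mem I (Finset.mem_univ I)]
  · have hp : (bask I p) I = p := by simp [bask]
    rw [hp]
  · intro J _ hJ
    have hz : (bask I p) J = 0 := by simp [bask, hJ]
    rw [hz, bask_zero, wmulk_zero_left, Hdelk_zero, wmulk_zero_left, wmulk_zero_left]
    simp

end KeyMain

theorem stmt17 (n k : ℕ) (hk : 1 ≤ k) (hkn : k ≤ n) :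
    (∀ i j : Fin (n + 1 - k), (DDk n k i).comp (DDk n k j) = (DDk n k j).comp (DDk n k i))
    ∧ (∀ (I K : Finset (Fin (n + 1 - k))) (J L : Fin (n + 1 - k) →₀ ℕ),
        ((-1 : ℤ) ^ I.card) •
            bkk (bask I (MvPolynomial.monomial J 1)) (bask K (MvPolynomial.monomial L 1))
          = wmulk (Hdelk (bask I (MvPolynomial.monomial L 1)))
              (bask K (MvPolynomial.monomial J 1))
            + ((-1 : ℤ) ^ I.card) •
                wmulk (bask I (MvPolynomial.monomial L 1))
                  (Hdelk (bask K (MvPolynomial.monomial J 1)))) := by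
  refine ⟨fun i j => DDk_comm hk hkn i j, fun I K J L => ?_⟩
  rw [bkk_bask]
  have hc : ((-1 : ℤ) ^ I.card) * ((-1 : ℤ) ^ I.card) = 1 := by
    rw [← pow_add]; exact Even.neg_one_pow ⟨I.card, rfl⟩
  rw [smul_sub, smul_smul, hc, one_smul]
  exact key I K (MvPolynomial.monomial J 1) (MvPolynomial.monomial L 1)
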